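/- Let A be a self-adjoint operator on an n-dimensional real inner product space with eigenvalues λ_1,…,λ_n and elementary symmetric functions S_r. If S_{r+1} = 0 and S_{r+2} = 0 for some 0 ≤ r ≤ n−2, then S_j = 0 for all j ≥ r+1; equivalently, at least n−r of the eigenvalues λ_i vanish. -/

import Mathlib

open Polynomial

private lemma my_esymm_zero (M : Multiset ℝ) : M.esymm 0 = 1 := by
  simp [Multiset.esymm]

private lemma my_esymm_cons (a : ℝ) (M : Multiset ℝ) (k : ℕ) :
    (a ::ₘ M).esymm (k + 1) = M.esymm (k + 1) + a * M.esymm k := by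
  simp [Multiset.esymm, Multiset.powersetCard_cons, Multiset.map_map, Function.comp,
    Multiset.sum_map_mul_left]

private lemma my_esymm_gt (M : Multiset ℝ) {k : ℕ} (h : Multiset.card M < k) :
    M.esymm k = 0 := by
  rw [Multiset.esymm, Multiset.powersetCard_eq_empty _ h]
  simp

private lemma my_esymm_card (M : Multiset ℝ) : M.esymm (Multiset.card M) = M.prod := by
  induction M using Multiset.induction_on with
  | empty => simp [Multiset.esymm]
  | cons a M ih =>
    rw [Multiset.card_cons, my_esymm_cons, my_esymm_gt M (by omega), ih, Multiset.prod_cons,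
      zero_add]

private lemma my_esymm_one (M : Multiset ℝ) : M.esymm 1 = M.sum := by
  rw [Multiset.esymm, Multiset.powersetCard_one, Multiset.map_map]
  simp [Function.comp]

private lemma my_sq_sum (M : Multiset ℝ) :
    M.sum ^ 2 = (M.map (· ^ 2)).sum + 2 * M.esymm 2 := by
  induction M using Multiset.induction_on with
  | empty =>
    rw [my_esymm_gt (0 : Multiset ℝ) (show Multiset.card (0 : Multiset ℝ) < 2 by simp)]
    simp
  | cons a M ih =>
    rw [Multiset.sum_cons, Multiset.map_cons, Multiset.sum_cons, my_esymm_cons, my_esymm_one]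
    have h : (a + M.sum) ^ 2 = a ^ 2 + M.sum ^ 2 + 2 * (a * M.sum) := by ring
    rw [h, ih]
    ring

private lemma my_esymm_inv :
    ∀ (M : Multiset ℝ), (0 : ℝ) ∉ M → ∀ j k : ℕ, j + k = Multiset.card M →
      (M.map (·⁻¹)).esymm j * M.prod = M.esymm k := by
  intro M
  induction M using Multiset.induction_on with
  | empty =>
    intro _ j k hjk
    simp only [Multiset.card_zero] at hjk
    obtain ⟨rfl, rfl⟩ : j = 0 ∧ k = 0 := by omega
    simp [my_esymm_zero]
  | cons a M ih =>
    intro h0 j k hjk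
    have ha : a ≠ 0 := fun h => h0 (h ▸ Multiset.mem_cons_self a M)
    have h0' : (0 : ℝ) ∉ M := fun h => h0 (Multiset.mem_cons_of_mem h)
    rw [Multiset.card_cons] at hjk
    rw [Multiset.map_cons, Multiset.prod_cons]
    cases j with
    | zero =>
      have hk : k = Multiset.card M + 1 := by omega
      rw [my_esymm_zero, one_mul, hk, ← Multiset.card_cons a M, my_esymm_card,
        Multiset.prod_cons]
    | succ j' =>
      rw [my_esymm_cons]
      have expand : (((M.map (·⁻¹)).esymm (j' + 1)) + a⁻¹ * ((M.map (·⁻¹)).esymm j')) *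
          (a * M.prod) =
          a * ((M.map (·⁻¹)).esymm (j' + 1) * M.prod) + ((M.map (·⁻¹)).esymm j' * M.prod) := by
        field_simp
      rw [expand]
      cases k with
      | zero =>
        have hj' : j' = Multiset.card M := by omega
        rw [my_esymm_gt (M.map (·⁻¹)) (by rw [Multiset.card_map]; omega), zero_mul, mul_zero,
          zero_add, ih h0' j' 0 (by omega), my_esymm_zero, my_esymm_zero]
      | succ k' =>
        rw [ih h0' (j' + 1) k' (by omega), ih h0' j' (k' + 1) (by omega), my_esymm_cons]
        ring

private lemma my_deriv_rooted (p : ℝ[X]) (hroots : Multiset.card p.roots = p.natDegree)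
    (hn : 0 < p.natDegree) :
    Multiset.card (derivative p).roots = (derivative p).natDegree ∧
      (derivative p).natDegree = p.natDegree - 1 := by
  have hdeg := Polynomial.degree_derivative_eq p hn
  have hnd : (derivative p).natDegree = p.natDegree - 1 :=
    Polynomial.natDegree_eq_of_degree_eq_some hdeg
  have hle : Multiset.card (derivative p).roots ≤ (derivative p).natDegree :=
    Polynomial.card_roots' _
  have hge := Polynomial.card_roots_le_derivative p
  exact ⟨by omega, hnd⟩

private lemma my_lemB (p : ℝ[X]) (hroots : Multiset.card p.roots = p.natDegree)
    (hn : 0 < p.natDegree) (h1 : p.coeff 1 = 0) (h2 : p.coeff 2 = 0) : p.coeff 0 = 0 := by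
  by_contra h0
  have hp : p ≠ 0 := by rintro rfl; simp at hn
  have hlc : p.leadingCoeff ≠ 0 := Polynomial.leadingCoeff_ne_zero.mpr hp
  have h0root : (0 : ℝ) ∉ p.roots := by
    intro hmem
    exact h0 (by rw [Polynomial.coeff_zero_eq_eval_zero]; exact
      Polynomial.isRoot_of_mem_roots hmem)
  have e1 : p.roots.esymm (p.natDegree - 1) = 0 := by
    have hc := Polynomial.coeff_eq_esymm_roots_of_card hroots (show 1 ≤ p.natDegree from hn)
    rw [h1] at hc
    have hpow : ((-1 : ℝ)) ^ (p.natDegree - 1) ≠ 0 := by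
      apply pow_ne_zero; norm_num
    rcases mul_eq_zero.mp hc.symm with h | h
    · rcases mul_eq_zero.mp h with h' | h'
      · exact absurd h' hlc
      · exact absurd h' hpow
    · exact h
  have hn2 : 2 ≤ p.natDegree := by
    by_contra hlt
    have : p.natDegree = 1 := by omega
    rw [this] at e1
    simp [my_esymm_zero] at e1
  have e2 : p.roots.esymm (p.natDegree - 2) = 0 := by
    have hc := Polynomial.coeff_eq_esymm_roots_of_card hroots hn2
    rw [h2] at hc
    have hpow : ((-1 : ℝ)) ^ (p.natDegree - 2) ≠ 0 := by
      apply pow_ne_zero; norm_num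
    rcases mul_eq_zero.mp hc.symm with h | h
    · rcases mul_eq_zero.mp h with h' | h'
      · exact absurd h' hlc
      · exact absurd h' hpow
    · exact h
  have hprod : p.roots.prod ≠ 0 := Multiset.prod_ne_zero h0root
  have r1 := my_esymm_inv p.roots h0root 1 (p.natDegree - 1) (by omega)
  have r2 := my_esymm_inv p.roots h0root 2 (p.natDegree - 2) (by omega)
  rw [e1] at r1
  rw [e2] at r2
  have s1 : (p.roots.map (·⁻¹)).esymm 1 = 0 := by
    rcases mul_eq_zero.mp r1 with h | h
    · exact h
    · exact absurd h hprod
  have s2 : (p.roots.map (·⁻¹)).esymm 2 = 0 := by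
    rcases mul_eq_zero.mp r2 with h | h
    · exact h
    · exact absurd h hprod
  have hsum : (p.roots.map (·⁻¹)).sum = 0 := by rw [← my_esymm_one]; exact s1
  have hsq := my_sq_sum (p.roots.map (·⁻¹))
  rw [hsum, s2] at hsq
  obtain ⟨ν, hν⟩ : ∃ ν, ν ∈ p.roots.map (·⁻¹) :=
    Multiset.card_pos_iff_exists_mem.mp (by rw [Multiset.card_map]; omega)
  have hν0 : ν ≠ 0 := by
    obtain ⟨μ, hμ, rfl⟩ := Multiset.mem_map.mp hν
    exact inv_ne_zero (fun h => h0root (h ▸ hμ))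
  have hle : ν ^ 2 ≤ ((p.roots.map (·⁻¹)).map (· ^ 2)).sum := by
    apply Multiset.single_le_sum
    · intro x hx
      obtain ⟨y, _, rfl⟩ := Multiset.mem_map.mp hx
      positivity
    · exact Multiset.mem_map_of_mem _ hν
  have hpos : 0 < ν ^ 2 := by positivity
  simp only [ne_eq, zero_pow, mul_zero, add_zero, OfNat.ofNat_ne_zero,
    not_false_eq_true] at hsq
  linarith

private lemma my_chain :
    ∀ (t : ℕ) (p : ℝ[X]), Multiset.card p.roots = p.natDegree → t + 1 < p.natDegree →
      p.coeff t = 0 → p.coeff (t + 1) = 0 → ∀ j ≤ t + 1, p.coeff j = 0 := by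
  intro t
  induction t with
  | zero =>
    intro p _ _ h0 h1 j hj
    interval_cases j
    · exact h0
    · exact h1
  | succ t ih =>
    intro p hroots hdeg h1 h2 j hj
    have hn : 0 < p.natDegree := by omega
    obtain ⟨hq, hqd⟩ := my_deriv_rooted p hroots hn
    have c1 : (derivative p).coeff t = 0 := by
      rw [Polynomial.coeff_derivative, h1, zero_mul]
    have c2 : (derivative p).coeff (t + 1) = 0 := by
      rw [Polynomial.coeff_derivative, h2, zero_mul]
    have hd2 : t + 1 < (derivative p).natDegree := by omega
    have hder := ih (derivative p) hq hd2 c1 c2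
    have hp1 : ∀ i, 1 ≤ i → i ≤ t + 2 → p.coeff i = 0 := by
      intro i hi1 hi2
      have hd := hder (i - 1) (by omega)
      rw [Polynomial.coeff_derivative] at hd
      have hfac : ((i - 1 : ℕ) : ℝ) + 1 ≠ 0 := by positivity
      have := mul_eq_zero.mp hd
      rcases this with h | h
      · rwa [Nat.sub_add_cancel hi1] at h
      · exact absurd h hfac
    have h0 : p.coeff 0 = 0 :=
      my_lemB p hroots hn (hp1 1 (by omega) (by omega)) (hp1 2 (by omega) (by omega))
    rcases Nat.eq_zero_or_pos j with rfl | hj0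
    · exact h0
    · exact hp1 j hj0 hj

private lemma my_core (M : Multiset ℝ) (h0 : (0 : ℝ) ∉ M) (k : ℕ) (hk : 1 ≤ k)
    (hk2 : k + 1 ≤ Multiset.card M) (e1 : M.esymm k = 0) (e2 : M.esymm (k + 1) = 0) :
    False := by
  set m := Multiset.card M with hm
  set p := (M.map fun a => Polynomial.X - Polynomial.C a).prod with hpdef
  have hroots : p.roots = M := Polynomial.roots_multiset_prod_X_sub_C M
  have hdeg : p.natDegree = m := Polynomial.natDegree_multiset_prod_X_sub_C_eq_card M
  have hrc : Multiset.card p.roots = p.natDegree := by rw [hroots, hdeg]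
  have ct : p.coeff (m - (k + 1)) = 0 := by
    rw [hpdef, Multiset.prod_X_sub_C_coeff M (by omega)]
    have h' : m - (m - (k + 1)) = k + 1 := by omega
    rw [← hm, h', e2, mul_zero]
  have ct1 : p.coeff (m - (k + 1) + 1) = 0 := by
    have h'' : m - (k + 1) + 1 = m - k := by omega
    rw [h'', hpdef, Multiset.prod_X_sub_C_coeff M (by omega)]
    have h' : m - (m - k) = k := by omega
    rw [← hm, h', e1, mul_zero]
  have h0c := my_chain (m - (k + 1)) p hrc (by omega) ct ct1 0 (by omega)
  rw [hpdef, Multiset.prod_X_sub_C_coeff M (by omega), ← hm, Nat.sub_zero] at h0c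
  rcases mul_eq_zero.mp h0c with h | h
  · exact pow_ne_zero m (by norm_num : (-1 : ℝ) ≠ 0) h
  · rw [my_esymm_card] at h
    exact Multiset.prod_ne_zero h0 h

private lemma my_esymm_filter (M : Multiset ℝ) :
    ∀ k, M.esymm k = (M.filter (fun x => ¬x = 0)).esymm k := by
  induction M using Multiset.induction_on with
  | empty => intro k; simp
  | cons a M ih =>
    intro k
    by_cases ha : a = 0
    · subst ha
      rw [Multiset.filter_cons_of_neg _ (by simp)]
      cases k with
      | zero => rw [my_esymm_zero, my_esymm_zero]
      | succ k' => rw [my_esymm_cons, zero_mul, add_zero, ih]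
    · rw [Multiset.filter_cons_of_pos _ (by simp [ha])]
      cases k with
      | zero => rw [my_esymm_zero, my_esymm_zero]
      | succ k' => rw [my_esymm_cons, my_esymm_cons, ih, ih k']

/-- If `lam : Fin n → ℝ` are the eigenvalues of a self-adjoint operator, with elementary
symmetric functions `S`, and `S (r+1) = S (r+2) = 0` for some `0 ≤ r ≤ n - 2`, then `S j = 0`
for all `j ≥ r + 1`; equivalently at least `n - r` of the eigenvalues vanish (so the kernel of
the operator has dimension at least `n - r`). -/
theorem stmt_5 {n r : ℕ} (lam : Fin n → ℝ)
    (S : ℕ → ℝ)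
    (hS : ∀ k, S k = ∑ s ∈ Finset.powersetCard k Finset.univ, ∏ i ∈ s, lam i)
    (hr : r ≤ n - 2)
    (h1 : S (r + 1) = 0) (h2 : S (r + 2) = 0) :
    (∀ j, r + 1 ≤ j → S j = 0) ∧
      n - r ≤ (Finset.univ.filter (fun i => lam i = 0)).card := by
  classical
  set M : Multiset ℝ := Finset.univ.val.map lam with hM
  have hcardM : Multiset.card M = n := by
    rw [hM, Multiset.card_map]
    simp
  have hSM : ∀ k, S k = M.esymm k := by
    intro k
    rw [hS k, hM, Finset.esymm_map_val]
  set M₀ : Multiset ℝ := M.filter (fun x => ¬x = 0) with hM₀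
  have h0M₀ : (0 : ℝ) ∉ M₀ := by
    intro h
    exact (Multiset.of_mem_filter h) rfl
  set m := Multiset.card M₀ with hm
  have hSM₀ : ∀ k, S k = M₀.esymm k := by
    intro k
    rw [hSM k, my_esymm_filter M k]
  have hmn : m ≤ n := by
    rw [hm, ← hcardM, hM₀]
    exact Multiset.card_le_card (Multiset.filter_le _ M)
  have hmr : m ≤ r := by
    by_contra hgt
    push_neg at hgt
    rcases eq_or_lt_of_le (Nat.succ_le_of_lt hgt) with heq | hlt
    · -- m = r + 1
      have hrm : r + 1 = Multiset.card M₀ := by omega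
      have : S (r + 1) = M₀.prod := by
        rw [hSM₀, hrm, my_esymm_card]
      rw [h1] at this
      exact Multiset.prod_ne_zero h0M₀ this.symm
    · -- m ≥ r + 2
      exact my_core M₀ h0M₀ (r + 1) (by omega) (by omega) (by rw [← hSM₀]; exact h1)
        (by rw [← hSM₀]; exact h2)
  constructor
  · intro j hj
    rw [hSM₀ j]
    exact my_esymm_gt M₀ (by omega)
  · have hfilter : (Finset.univ.filter (fun i => lam i = 0)).card =
        Multiset.card (M.filter (fun x => x = 0)) := by
      rw [hM, Multiset.filter_map, Multiset.card_map]
      rfl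
    have hsplit : Multiset.card (M.filter (fun x => x = 0)) + m = n := by
      rw [hm, hM₀, ← hcardM]
      rw [← Multiset.card_add, Multiset.filter_add_not (fun x => x = 0) M]
    omega
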